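/- arXiv:1608.08613 — 4 statements merged into one kernel-verified Lean document; each statement's English description precedes it below -/
import Mathlib

section
/- For every n ≥ 1, (1-q₁)(1-q₂)(1-qⁿ)/(1-q) = ∑_{λ⊢n} (∏_{i=1}^{t} (1-q₁^{n_i})(1-q₂^{n_i}))/z_λ, where the sum is over all partitions λ = (n₁ ≥ ... ≥ n_t) of n, q = q₁q₂, and z_λ = ∏_{i}(number of parts of λ equal to i)! · ∏_{i=1}^{t} n_i. -/
/-- The standard normalization constant `z_λ = ∏_i m_i(λ)! · ∏_i n_i` of a partition. -/
def zlam {n : ℕ} (p : n.Partition) : ℕ :=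
  (∏ i ∈ p.parts.toFinset, (p.parts.count i).factorial) * p.parts.prod

open Finset Multiset

/-- Erase one copy of a part `m` from a partition of `n`, yielding a partition of `n - m`. -/
def erasePart {n : ℕ} (p : n.Partition) (m : ℕ) (hm : m ∈ p.parts) : (n - m).Partition where
  parts := p.parts.erase m
  parts_pos := fun hi => p.parts_pos (Multiset.mem_of_mem_erase hi)
  parts_sum := by
    have h := p.parts_sum
    rw [← Multiset.cons_erase hm, Multiset.sum_cons] at h
    omega

/-- Add a part `m` to a partition of `n - m`, yielding a partition of `n`. -/
def consPart {n m : ℕ} (hm1 : 1 ≤ m) (hmn : m ≤ n) (μ : (n - m).Partition) : n.Partition where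
  parts := m ::ₘ μ.parts
  parts_pos := fun hi => by
    rcases Multiset.mem_cons.mp hi with h | h
    · omega
    · exact μ.parts_pos h
  parts_sum := by rw [Multiset.sum_cons, μ.parts_sum]; omega

lemma zlam_pos {n : ℕ} (p : n.Partition) : 0 < zlam p := by
  unfold zlam
  apply Nat.mul_pos
  · exact Finset.prod_pos fun i _ => Nat.factorial_pos _
  · exact Multiset.prod_pos fun i hi => p.parts_pos hi

lemma zlam_erase {n : ℕ} (p : n.Partition) (m : ℕ) (hm : m ∈ p.parts) :
    zlam p = (m * p.parts.count m) * zlam (erasePart p m hm) := by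
  unfold zlam erasePart
  simp only
  set s := p.parts with hs
  have hprod : s.prod = m * (s.erase m).prod := (Multiset.prod_erase hm).symm
  have hsub : (s.erase m).toFinset ⊆ s.toFinset :=
    Multiset.toFinset_subset.mpr (Multiset.erase_subset m s)
  have h1 : ∏ i ∈ (s.erase m).toFinset, ((s.erase m).count i).factorial
      = ∏ i ∈ s.toFinset, ((s.erase m).count i).factorial := by
    refine (Finset.prod_subset hsub ?_)
    intro i _ hni
    rw [Multiset.count_eq_zero_of_notMem (fun h => hni (Multiset.mem_toFinset.mpr h))]
    rfl
  have hmF : m ∈ s.toFinset := Multiset.mem_toFinset.mpr hm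
  have hc : 0 < s.count m := Multiset.count_pos.mpr hm
  have h3 : ∏ i ∈ s.toFinset.erase m, (s.count i).factorial
      = ∏ i ∈ s.toFinset.erase m, ((s.erase m).count i).factorial :=
    Finset.prod_congr rfl (fun i hi => by
      rw [Multiset.count_erase_of_ne (Finset.ne_of_mem_erase hi)])
  have h2 : ∏ i ∈ s.toFinset, (s.count i).factorial
      = s.count m * ∏ i ∈ s.toFinset, ((s.erase m).count i).factorial := by
    rw [← Finset.mul_prod_erase s.toFinset (fun i => (s.count i).factorial) hmF,
        ← Finset.mul_prod_erase s.toFinset (fun i => ((s.erase m).count i).factorial) hmF]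
    simp only [Multiset.count_erase_self]
    rw [← h3, ← Nat.mul_factorial_pred hc.ne']
    ring
  rw [h2, hprod, ← h1]
  ring

lemma prod_map_erase {F : Type*} [CommMonoid F] (f : ℕ → F) {n : ℕ} (p : n.Partition)
    (m : ℕ) (hm : m ∈ p.parts) :
    (p.parts.map f).prod = f m * ((p.parts.erase m).map f).prod := by
  conv_lhs => rw [← Multiset.cons_erase hm]
  rw [Multiset.map_cons, Multiset.prod_cons]

section Field
variable {F : Type*} [Field F] [CharZero F]

/-- The partition sum. -/
noncomputable def Sfun (q₁ q₂ : F) (n : ℕ) : F :=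
  ∑ p : n.Partition, (p.parts.map (fun m => (1 - q₁ ^ m) * (1 - q₂ ^ m))).prod / (zlam p : F)

lemma Sfun_zero (q₁ q₂ : F) : Sfun q₁ q₂ 0 = 1 := by
  rw [Sfun, Fintype.sum_unique]
  simp [zlam]

set_option maxHeartbeats 1000000 in
lemma Sfun_rec (q₁ q₂ : F) (n : ℕ) :
    (n : F) * Sfun q₁ q₂ n =
      ∑ m ∈ Finset.Icc 1 n, (1 - q₁ ^ m) * (1 - q₂ ^ m) * Sfun q₁ q₂ (n - m) := by
  classical
  set fP : ℕ → F := fun m => (1 - q₁ ^ m) * (1 - q₂ ^ m) with hfP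
  have lhs_eq : ∀ p : n.Partition,
      (n : F) * ((p.parts.map fP).prod / (zlam p : F)) =
      ∑ m ∈ p.parts.toFinset,
        ((p.parts.count m * m : ℕ) : F) * ((p.parts.map fP).prod / (zlam p : F)) := by
    intro p
    rw [← Finset.sum_mul, ← Nat.cast_sum]
    congr 2
    have h := Finset.sum_multiset_count p.parts
    rw [p.parts_sum] at h
    simpa [smul_eq_mul, mul_comm] using h
  rw [Sfun, Finset.mul_sum]
  calc ∑ p : n.Partition, (n : F) * ((p.parts.map fP).prod / (zlam p : F))
      = ∑ p : n.Partition, ∑ m ∈ p.parts.toFinset,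
          ((p.parts.count m * m : ℕ) : F) * ((p.parts.map fP).prod / (zlam p : F)) :=
        Finset.sum_congr rfl (fun p _ => lhs_eq p)
    _ = ∑ x ∈ (Finset.univ : Finset n.Partition).sigma (fun p => p.parts.toFinset),
          ((x.1.parts.count x.2 * x.2 : ℕ) : F) * ((x.1.parts.map fP).prod / (zlam x.1 : F)) :=
        by rw [Finset.sum_sigma]
    _ = ∑ x ∈ (Finset.Icc 1 n).sigma
          (fun m => (Finset.univ : Finset (n - m).Partition)),
          fP x.1 * ((x.2.parts.map fP).prod / (zlam x.2 : F)) := by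
        refine Finset.sum_bij'
          (fun a ha => (⟨a.2, erasePart a.1 a.2
            (Multiset.mem_toFinset.mp (Finset.mem_sigma.mp ha).2)⟩ :
            (m : ℕ) × (n - m).Partition))
          (fun b hb => (⟨consPart (Finset.mem_Icc.mp (Finset.mem_sigma.mp hb).1).1
            (Finset.mem_Icc.mp (Finset.mem_sigma.mp hb).1).2 b.2, b.1⟩ :
            (_ : n.Partition) × ℕ)) ?_ ?_ ?_ ?_ ?_
        · -- hi
          rintro ⟨p, m⟩ ha
          dsimp only
          have hm : m ∈ p.parts := Multiset.mem_toFinset.mp (Finset.mem_sigma.mp ha).2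
          exact Finset.mem_sigma.mpr ⟨Finset.mem_Icc.mpr ⟨p.parts_pos hm,
            le_trans (Multiset.le_sum_of_mem hm) p.parts_sum.le⟩, Finset.mem_univ _⟩
        · -- hj
          rintro ⟨m, μ⟩ hb
          dsimp only
          exact Finset.mem_sigma.mpr ⟨Finset.mem_univ _,
            Multiset.mem_toFinset.mpr (Multiset.mem_cons_self _ _)⟩
        · -- left_inv
          rintro ⟨p, m⟩ ha
          have hm : m ∈ p.parts := Multiset.mem_toFinset.mp (Finset.mem_sigma.mp ha).2
          have key : ∀ (h1 : 1 ≤ m) (h2 : m ≤ n),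
              consPart h1 h2 (erasePart p m hm) = p :=
            fun _ _ => Nat.Partition.ext (Multiset.cons_erase hm)
          dsimp only
          rw [key]
        · -- right_inv
          rintro ⟨m, μ⟩ hb
          have key : ∀ (h1 : 1 ≤ m) (h2 : m ≤ n)
              (hm' : m ∈ (consPart h1 h2 μ).parts),
              erasePart (consPart h1 h2 μ) m hm' = μ :=
            fun _ _ _ => Nat.Partition.ext (Multiset.erase_cons_head m μ.parts)
          dsimp only
          rw [key]
        · -- value equality
          rintro ⟨p, m⟩ ha
          dsimp only
          have hm : m ∈ p.parts := Multiset.mem_toFinset.mp (Finset.mem_sigma.mp ha).2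
          set μ := erasePart p m hm with hμ
          have hw : (p.parts.map fP).prod = fP m * ((μ.parts.map fP)).prod :=
            prod_map_erase fP p m hm
          have hz : (zlam p : F) = ((m : F) * (p.parts.count m : F)) * (zlam μ : F) := by
            rw [zlam_erase p m hm]; push_cast; ring
          have hzμ : (zlam μ : F) ≠ 0 := Nat.cast_ne_zero.mpr (zlam_pos μ).ne'
          have hm0 : (m : F) ≠ 0 := Nat.cast_ne_zero.mpr (p.parts_pos hm).ne'
          have hc0 : ((p.parts.count m : ℕ) : F) ≠ 0 :=
            Nat.cast_ne_zero.mpr (Multiset.count_pos.mpr hm).ne'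
          rw [hw, hz]
          push_cast
          field_simp
    _ = ∑ m ∈ Finset.Icc 1 n, fP m * Sfun q₁ q₂ (n - m) := by
        rw [Finset.sum_sigma]
        refine Finset.sum_congr rfl (fun m _ => ?_)
        rw [Sfun, Finset.mul_sum]
    _ = ∑ m ∈ Finset.Icc 1 n, (1 - q₁ ^ m) * (1 - q₂ ^ m) * Sfun q₁ q₂ (n - m) := rfl

end Field

lemma sum_reflect {M : Type*} [AddCommMonoid M] (f : ℕ → M) (k : ℕ) :
    ∑ m ∈ Finset.Icc 1 k, f (k + 1 - m) = ∑ m ∈ Finset.Icc 1 k, f m := by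
  refine Finset.sum_nbij' (fun m => k + 1 - m) (fun m => k + 1 - m) ?_ ?_ ?_ ?_ ?_ <;>
      intro a ha <;> simp only [Finset.mem_Icc] at ha ⊢ <;> omega

section Field2
variable {F : Type*} [Field F] [CharZero F]

lemma geom_Icc (x : F) (k : ℕ) :
    (1 - x) * (∑ m ∈ Finset.Icc 1 k, x ^ m) = x - x ^ (k + 1) := by
  have h := geom_sum_mul x (k + 1)
  have hr : ∑ i ∈ Finset.range (k + 1), x ^ i = 1 + ∑ m ∈ Finset.Icc 1 k, x ^ m := by
    rw [Finset.range_eq_Ico, Finset.sum_eq_sum_Ico_succ_bot (Nat.succ_pos k), pow_zero]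
    congr 1
  rw [hr] at h
  linear_combination -h

lemma Arec (q₁ q₂ : F) (hq : q₁ * q₂ ≠ 1) (k : ℕ) :
    (1 - q₁ ^ (k+1)) * (1 - q₂ ^ (k+1))
      + ∑ m ∈ Finset.Icc 1 k, (1 - q₁ ^ m) * (1 - q₂ ^ m) *
          ((1 - q₁) * (1 - q₂) * (1 - (q₁ * q₂) ^ (k + 1 - m)) / (1 - q₁ * q₂))
    = ((k : F) + 1) * ((1 - q₁) * (1 - q₂) * (1 - (q₁ * q₂) ^ (k+1)) / (1 - q₁ * q₂)) := by
  have h1q : (1 : F) - q₁ * q₂ ≠ 0 := sub_ne_zero.mpr (Ne.symm hq)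
  set G₁ := ∑ m ∈ Finset.Icc 1 k, q₁ ^ m with hG₁
  set G₂ := ∑ m ∈ Finset.Icc 1 k, q₂ ^ m with hG₂
  set GG := ∑ m ∈ Finset.Icc 1 k, q₁ ^ m * q₂ ^ m with hGG
  have hgeom1 : (1 - q₁) * G₁ = q₁ - q₁ ^ (k+1) := geom_Icc q₁ k
  have hgeom2 : (1 - q₂) * G₂ = q₂ - q₂ ^ (k+1) := geom_Icc q₂ k
  have hpt : ∀ m ∈ Finset.Icc 1 k,
      (1 - q₁ ^ m) * (1 - q₂ ^ m) *
          ((1 - q₁) * (1 - q₂) * (1 - (q₁ * q₂) ^ (k + 1 - m)) / (1 - q₁ * q₂))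
      = ((1 - q₁) * (1 - q₂) / (1 - q₁ * q₂)) *
          ((1 - q₁ ^ m - q₂ ^ m + q₁ ^ m * q₂ ^ m)
            - (fun j => q₁ ^ j * q₂ ^ j - q₁ ^ (k+1) * q₂ ^ j - q₂ ^ (k+1) * q₁ ^ j
                + q₁ ^ (k+1) * q₂ ^ (k+1)) (k + 1 - m)) := by
    intro m hm
    simp only [Finset.mem_Icc] at hm
    set j := k + 1 - m with hj
    have hmj : k + 1 = m + j := by omega
    simp only
    rw [hmj]
    ring
  rw [Finset.sum_congr rfl hpt, ← Finset.mul_sum, Finset.sum_sub_distrib,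
    sum_reflect (fun j => q₁ ^ j * q₂ ^ j - q₁ ^ (k+1) * q₂ ^ j - q₂ ^ (k+1) * q₁ ^ j
                + q₁ ^ (k+1) * q₂ ^ (k+1)) k]
  have hu : ∑ m ∈ Finset.Icc 1 k, (1 - q₁ ^ m - q₂ ^ m + q₁ ^ m * q₂ ^ m)
      = (k : F) - G₁ - G₂ + GG := by
    simp [Finset.sum_add_distrib, Finset.sum_sub_distrib, Finset.sum_const, Nat.card_Icc,
      nsmul_eq_mul]
    rw [hG₁, hG₂, hGG]
  have hg : ∑ j ∈ Finset.Icc 1 k, (q₁ ^ j * q₂ ^ j - q₁ ^ (k+1) * q₂ ^ j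
        - q₂ ^ (k+1) * q₁ ^ j + q₁ ^ (k+1) * q₂ ^ (k+1))
      = GG - q₁ ^ (k+1) * G₂ - q₂ ^ (k+1) * G₁ + (k : F) * (q₁ ^ (k+1) * q₂ ^ (k+1)) := by
    simp [Finset.sum_add_distrib, Finset.sum_sub_distrib, Finset.sum_const, Nat.card_Icc,
      nsmul_eq_mul, ← Finset.mul_sum]
    rw [hG₁, hG₂, hGG]
  rw [hu, hg]
  apply mul_left_cancel₀ h1q
  have hc : ∀ X : F, (1 - q₁ * q₂) * ((1 - q₁) * (1 - q₂) / (1 - q₁ * q₂) * X)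
      = (1 - q₁) * (1 - q₂) * X := by
    intro X; field_simp
  have hc2 : (1 - q₁ * q₂) * (((k : F) + 1) *
        ((1 - q₁) * (1 - q₂) * (1 - (q₁ * q₂) ^ (k+1)) / (1 - q₁ * q₂)))
      = ((k : F) + 1) * ((1 - q₁) * (1 - q₂) * (1 - (q₁ * q₂) ^ (k+1))) := by
    field_simp
  rw [mul_add, hc, hc2]
  linear_combination (-(1 - q₂) * (1 - q₂ ^ (k+1))) * hgeom1
    - ((1 - q₁) * (1 - q₁ ^ (k+1))) * hgeom2

end Field2

/-- For every `n ≥ 1`,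
`(1-q₁)(1-q₂)(1-qⁿ)/(1-q) = ∑_{λ ⊢ n} (∏_{i=1}^t (1-q₁^{n_i})(1-q₂^{n_i}))/z_λ`,
where `q = q₁q₂` and the sum runs over all partitions `λ = (n₁ ≥ ... ≥ n_t)` of `n`. -/
theorem partition_sum_identity {F : Type*} [Field F] [CharZero F] (q₁ q₂ : F)
    (hq : q₁ * q₂ ≠ 1) (n : ℕ) (hn : 1 ≤ n) :
    (1 - q₁) * (1 - q₂) * (1 - (q₁ * q₂) ^ n) / (1 - q₁ * q₂) =
      ∑ p : n.Partition,
        (p.parts.map (fun m => (1 - q₁ ^ m) * (1 - q₂ ^ m))).prod / (zlam p : F) := by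
  have main : ∀ n : ℕ, Sfun q₁ q₂ n =
      if n = 0 then 1 else (1 - q₁) * (1 - q₂) * (1 - (q₁ * q₂) ^ n) / (1 - q₁ * q₂) := by
    intro n
    induction n using Nat.strong_induction_on with
    | _ n ih =>
      match n with
      | 0 => simp [Sfun_zero]
      | (k+1) =>
        rw [if_neg (Nat.succ_ne_zero k)]
        have hrec := Sfun_rec q₁ q₂ (k+1)
        have hins : Finset.Icc 1 (k+1) = insert (k+1) (Finset.Icc 1 k) := by
          ext x; simp only [Finset.mem_Icc, Finset.mem_insert]; omega
        rw [hins, Finset.sum_insert (by simp [Finset.mem_Icc])] at hrec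
        simp only [Nat.sub_self, Sfun_zero, mul_one] at hrec
        rw [Finset.sum_congr rfl (fun m hm => by
          have hm' := Finset.mem_Icc.mp hm
          rw [ih (k+1-m) (by omega), if_neg (by omega)])] at hrec
        have halg := Arec q₁ q₂ hq k
        have hk : ((k+1 : ℕ) : F) ≠ 0 := Nat.cast_ne_zero.mpr (Nat.succ_ne_zero k)
        apply mul_left_cancel₀ hk
        rw [hrec]
        push_cast
        exact halg
  have h := main n
  rw [if_neg (by omega)] at h
  exact h.symm
end

section
/- Define bosons b_n^i (1 ≤ i ≤ r, n ∈ ℤ∖{0}) with relations [b_{-n}^i, b_n^j] = n(1-q₁ⁿ)(1-q₂ⁿ)·c_{ij}(n) for n > 0, where c_{ij}(n) = 1-q^{-n} if i < j, 1 if i = j, 0 if i > j, and all other commutators zero. Set p_n = ∑_{i=1}^{r} b_n^i q^{n(i-1)} and h_n^i = b_n^i − p_n(1-qⁿ)/(1-q^{rn}). Then [p_m, h_n^i] = 0 for all m, n ∈ ℤ∖{0} and all i. -/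
lemma sumS' {F : Type*} [CommRing F] (s : F) (r i : ℕ) (hi : i < r) :
    ∑ l ∈ Finset.range r, s ^ l * (if l < i then 1 - s else if l = i then 1 else 0) = 1 := by
  have h0 : ∑ l ∈ Finset.range r, s ^ l * (if l < i then 1 - s else if l = i then 1 else 0)
      = ∑ l ∈ Finset.range (i+1), s ^ l * (if l < i then 1 - s else if l = i then 1 else 0) := by
    symm
    apply Finset.sum_subset
    · intro x hx; simp only [Finset.mem_range] at *; omega
    · intro l hl hnl
      simp only [Finset.mem_range] at hl hnl
      rw [if_neg (by omega), if_neg (by omega), mul_zero]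
  rw [h0, Finset.sum_range_succ, if_neg (lt_irrefl i), if_pos rfl, mul_one]
  have h1 : ∑ l ∈ Finset.range i, s ^ l * (if l < i then 1 - s else if l = i then 1 else 0)
      = ∑ l ∈ Finset.range i, (s ^ l - s ^ (l+1)) := by
    refine Finset.sum_congr rfl fun l hl => ?_
    rw [if_pos (Finset.mem_range.mp hl)]
    ring
  rw [h1, Finset.sum_range_sub' (fun l => s ^ l) i]
  ring

lemma sumS {F : Type*} [Field F] (t : F) (ht : t ≠ 0) (r i : ℕ) (hi : i < r) :
    ∑ l ∈ Finset.range r, t ^ l * (if i < l then 1 - t⁻¹ else if i = l then 1 else 0)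
      = t ^ (r - 1) := by
  rw [Finset.range_eq_Ico,
    ← Finset.sum_Ico_consecutive _ (Nat.zero_le (i+1)) (by omega : i + 1 ≤ r)]
  have h1 : ∑ l ∈ Finset.Ico 0 (i+1), t ^ l * (if i < l then 1 - t⁻¹ else if i = l then 1 else 0)
      = t ^ i := by
    rw [← Finset.range_eq_Ico]
    rw [Finset.sum_eq_single_of_mem i (Finset.self_mem_range_succ i)
      (by intro l hl hne
          simp only [Finset.mem_range] at hl
          rw [if_neg (by omega), if_neg (by omega), mul_zero])]
    rw [if_neg (lt_irrefl i), if_pos rfl, mul_one]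
  have h2 : ∑ l ∈ Finset.Ico (i+1) r, t ^ l * (if i < l then 1 - t⁻¹ else if i = l then 1 else 0)
      = t ^ (r-1) - t ^ i := by
    rw [Finset.sum_Ico_eq_sum_range]
    have h3 : ∀ j ∈ Finset.range (r - (i+1)),
        t ^ (i+1+j) * (if i < i+1+j then 1 - t⁻¹ else if i = i+1+j then 1 else 0)
        = t ^ (i+(j+1)) - t ^ (i+j) := by
      intro j hj
      rw [if_pos (by omega)]
      have ht' : t ^ (i+1+j) * t⁻¹ = t ^ (i+j) := by
        rw [show i+1+j = (i+j)+1 by omega, pow_succ, mul_assoc, mul_inv_cancel₀ ht, mul_one]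
      rw [mul_sub, mul_one, ht', show i+(j+1) = i+1+j by omega]
    rw [Finset.sum_congr rfl h3, Finset.sum_range_sub (fun j => t ^ (i+j)),
      show i + (r - (i+1)) = r - 1 by omega, add_zero]
  rw [h1, h2]
  ring

lemma csum_comm_left {F A : Type*} [CommSemiring F] [Ring A] [Algebra F A]
    {ι : Type*} (s : Finset ι) (a : ι → F) (x : ι → A) (y : A) :
    (∑ l ∈ s, algebraMap F A (a l) * x l) * y - y * ∑ l ∈ s, algebraMap F A (a l) * x l
      = ∑ l ∈ s, algebraMap F A (a l) * (x l * y - y * x l) := by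
  rw [Finset.sum_mul, Finset.mul_sum, ← Finset.sum_sub_distrib]
  refine Finset.sum_congr rfl fun l _ => ?_
  rw [mul_sub, mul_assoc]
  congr 1
  rw [← mul_assoc, ← Algebra.commutes, mul_assoc]

lemma csum_comm_right {F A : Type*} [CommSemiring F] [Ring A] [Algebra F A]
    {ι : Type*} (s : Finset ι) (a : ι → F) (x : ι → A) (y : A) :
    y * (∑ l ∈ s, algebraMap F A (a l) * x l) - (∑ l ∈ s, algebraMap F A (a l) * x l) * y
      = ∑ l ∈ s, algebraMap F A (a l) * (y * x l - x l * y) := by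
  rw [Finset.sum_mul, Finset.mul_sum, ← Finset.sum_sub_distrib]
  refine Finset.sum_congr rfl fun l _ => ?_
  rw [mul_sub, mul_assoc]
  congr 1
  rw [← mul_assoc, ← Algebra.commutes, mul_assoc]

lemma cG_one {F : Type*} [Field F] (q : F) (hgen : ∀ n : ℤ, n ≠ 0 → q ^ n ≠ 1)
    (r : ℕ) (hr : 0 < r) (n : ℤ) (hn : n ≠ 0) :
    ((1 - q ^ n) / (1 - q ^ ((r:ℤ) * n))) * (∑ k : Fin r, q ^ (n * (k : ℤ))) = 1 := by
  have hx : ∀ k : ℕ, q ^ (n * (k:ℤ)) = (q ^ n) ^ k := fun k => by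
    rw [zpow_mul, zpow_natCast]
  have hxr : q ^ ((r:ℤ) * n) = (q ^ n) ^ r := by
    rw [mul_comm, zpow_mul, zpow_natCast]
  have hne : 1 - (q ^ n) ^ r ≠ 0 := by
    rw [← hxr]
    exact sub_ne_zero_of_ne (Ne.symm (hgen _ (by positivity)))
  simp only [hx, hxr]
  rw [Fin.sum_univ_eq_sum_range (fun k => (q ^ n) ^ k) r, div_mul_eq_mul_div,
    show (1 - q ^ n) * ∑ k ∈ Finset.range r, (q ^ n) ^ k = 1 - (q ^ n) ^ r by
      linear_combination -geom_sum_mul (q ^ n) r,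
    div_self hne]

/-- In the gl_r deformed Heisenberg algebra with bosons `b_n^i` satisfying
`[b_{-n}^i, b_n^j] = n(1-q₁ⁿ)(1-q₂ⁿ)·(1-q^{-n} if i<j; 1 if i=j; 0 if i>j)` (n>0) and all
other commutators zero, setting `p_n = ∑_i b_n^i q^{n(i-1)}` and
`h_n^i = b_n^i - p_n (1-qⁿ)/(1-q^{rn})`, one has `[p_m, h_n^i] = 0` for all `m,n ≠ 0`. -/
theorem p_commutes_with_h {F : Type*} [Field F] {A : Type*} [Ring A] [Algebra F A]
    (q₁ q₂ : F) (hq0 : q₁ * q₂ ≠ 0) (hgen : ∀ n : ℤ, n ≠ 0 → (q₁ * q₂) ^ n ≠ 1)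
    (r : ℕ) (hr : 0 < r) (b : Fin r → ℤ → A)
    (hcomm : ∀ (i j : Fin r) (m n : ℤ), m ≠ 0 → n ≠ 0 → m + n ≠ 0 →
      b i m * b j n = b j n * b i m)
    (hrel : ∀ (i j : Fin r) (n : ℕ), 0 < n →
      b i (-(n : ℤ)) * b j (n : ℤ) - b j (n : ℤ) * b i (-(n : ℤ)) =
        algebraMap F A ((n : F) * (1 - q₁ ^ n) * (1 - q₂ ^ n) *
          (if i < j then 1 - ((q₁ * q₂) ^ n)⁻¹ else if i = j then 1 else 0))) :
    ∀ (m n : ℤ), m ≠ 0 → n ≠ 0 → ∀ i : Fin r,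
      (∑ l : Fin r, algebraMap F A ((q₁ * q₂) ^ (m * (l : ℤ))) * b l m) *
        (b i n - algebraMap F A ((1 - (q₁ * q₂) ^ n) / (1 - (q₁ * q₂) ^ ((r : ℤ) * n))) *
          ∑ l : Fin r, algebraMap F A ((q₁ * q₂) ^ (n * (l : ℤ))) * b l n) =
      (b i n - algebraMap F A ((1 - (q₁ * q₂) ^ n) / (1 - (q₁ * q₂) ^ ((r : ℤ) * n))) *
          ∑ l : Fin r, algebraMap F A ((q₁ * q₂) ^ (n * (l : ℤ))) * b l n) *
        (∑ l : Fin r, algebraMap F A ((q₁ * q₂) ^ (m * (l : ℤ))) * b l m) := by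
  intro m n hm hn i
  set q := q₁ * q₂ with hqdef
  set φ := algebraMap F A with hφ
  set c : F := (1 - q ^ n) / (1 - q ^ ((r:ℤ) * n)) with hc
  set Pm : A := ∑ l : Fin r, φ (q ^ (m * (l:ℤ))) * b l m with hPm
  set Pn : A := ∑ l : Fin r, φ (q ^ (n * (l:ℤ))) * b l n with hPn
  rw [← sub_eq_zero]
  have expand : Pm * (b i n - φ c * Pn) - (b i n - φ c * Pn) * Pm
      = (Pm * b i n - b i n * Pm) - φ c * (Pm * Pn - Pn * Pm) := by
    have h1 : Pm * (φ c * Pn) = φ c * (Pm * Pn) := by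
      rw [← mul_assoc, ← Algebra.commutes c Pm, mul_assoc]
    have h2 : φ c * Pn * Pm = φ c * (Pn * Pm) := mul_assoc _ _ _
    rw [mul_sub, sub_mul, h1, h2, mul_sub]
    abel
  rw [expand]
  have commPm : ∀ j : Fin r, Pm * b j n - b j n * Pm
      = ∑ l : Fin r, φ (q ^ (m * (l:ℤ))) * (b l m * b j n - b j n * b l m) := by
    intro j
    rw [hPm]
    exact csum_comm_left _ _ _ _
  have commPP : Pm * Pn - Pn * Pm
      = ∑ k : Fin r, φ (q ^ (n * (k:ℤ))) * (Pm * b k n - b k n * Pm) := by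
    rw [hPn]
    exact csum_comm_right _ _ _ Pm
  by_cases hmn : m + n = 0
  · obtain ⟨K, hK⟩ : ∃ K : F, ∀ j : Fin r, Pm * b j n - b j n * Pm = φ K := by
      rcases lt_or_gt_of_ne hm with hmneg | hmpos
      · -- m < 0, n = -m > 0
        set d := n.toNat with hddef
        have hdn : (d:ℤ) = n := by omega
        have hmd : m = -(d:ℤ) := by omega
        have hd : 0 < d := by omega
        refine ⟨(d:F) * (1 - q₁ ^ d) * (1 - q₂ ^ d), fun j => ?_⟩
        rw [commPm j]
        have cv : ∀ l : Fin r, b l m * b j n - b j n * b l m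
            = φ ((d:F) * (1 - q₁ ^ d) * (1 - q₂ ^ d) *
                (if l < j then 1 - (q ^ d)⁻¹ else if l = j then 1 else 0)) := by
          intro l
          rw [hmd, ← hdn]
          exact hrel l j d hd
        simp only [cv, ← map_mul]
        rw [← map_sum]
        congr 1
        have hexp : ∀ lv : ℕ, q ^ (m * (lv:ℤ)) = ((q ^ d)⁻¹) ^ lv := by
          intro lv
          rw [hmd, show (-(d:ℤ)) * (lv:ℤ) = -(((d*lv : ℕ) : ℤ)) by push_cast; ring,
            zpow_neg, zpow_natCast, pow_mul, ← inv_pow]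
        simp only [hexp, Fin.lt_def, Fin.ext_iff, mul_left_comm _ ((d:F) * (1 - q₁ ^ d) * (1 - q₂ ^ d)) _]
        rw [← Finset.mul_sum]
        rw [Fin.sum_univ_eq_sum_range
          (fun lv => ((q ^ d)⁻¹) ^ lv * (if lv < (j:ℕ) then 1 - (q ^ d)⁻¹ else if lv = (j:ℕ) then 1 else 0)) r]
        rw [sumS' ((q ^ d)⁻¹) r (j:ℕ) j.isLt, mul_one]
      · -- m > 0, n = -m < 0
        set d := m.toNat with hddef
        have hdm : (d:ℤ) = m := by omega
        have hnd : n = -(d:ℤ) := by omega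
        have hd : 0 < d := by omega
        refine ⟨-((d:F) * (1 - q₁ ^ d) * (1 - q₂ ^ d) * (q ^ d) ^ (r-1)), fun j => ?_⟩
        rw [commPm j]
        have cv : ∀ l : Fin r, b l m * b j n - b j n * b l m
            = φ (-((d:F) * (1 - q₁ ^ d) * (1 - q₂ ^ d) *
                (if j < l then 1 - (q ^ d)⁻¹ else if j = l then 1 else 0))) := by
          intro l
          rw [hnd, ← hdm]
          rw [show b l (d:ℤ) * b j (-(d:ℤ)) - b j (-(d:ℤ)) * b l (d:ℤ)
              = -(b j (-(d:ℤ)) * b l (d:ℤ) - b l (d:ℤ) * b j (-(d:ℤ))) from (neg_sub _ _).symm,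
            hrel j l d hd, map_neg]
        simp only [cv, ← map_mul, ← map_neg]
        rw [← map_sum]
        congr 1
        have hexp : ∀ lv : ℕ, q ^ (m * (lv:ℤ)) = (q ^ d) ^ lv := by
          intro lv
          rw [← hdm, show ((d:ℤ)) * (lv:ℤ) = (((d*lv : ℕ) : ℤ)) by push_cast; ring,
            zpow_natCast, pow_mul]
        simp only [hexp, Fin.lt_def, Fin.ext_iff, mul_neg,
          mul_left_comm _ ((d:F) * (1 - q₁ ^ d) * (1 - q₂ ^ d)) _]
        rw [Finset.sum_neg_distrib, ← Finset.mul_sum]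
        rw [Fin.sum_univ_eq_sum_range
          (fun lv => ((q ^ d)) ^ lv * (if (j:ℕ) < lv then 1 - (q ^ d)⁻¹ else if (j:ℕ) = lv then 1 else 0)) r]
        rw [sumS (q ^ d) (pow_ne_zero d hq0) r (j:ℕ) j.isLt]
    have hPP : Pm * Pn - Pn * Pm = φ ((∑ k : Fin r, q ^ (n * (k:ℤ))) * K) := by
      rw [commPP]
      simp only [hK, ← map_mul]
      rw [← map_sum]
      congr 1
      rw [Finset.sum_mul]
    rw [hK i, hPP, ← map_mul, ← map_sub]
    have hcG : c * ∑ k : Fin r, q ^ (n * (k:ℤ)) = 1 := cG_one q hgen r hr n hn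
    rw [show K - c * ((∑ k : Fin r, q ^ (n * (k:ℤ))) * K) = 0 by linear_combination (-K) * hcG,
      map_zero]
  · have z : ∀ (l j : Fin r), b l m * b j n - b j n * b l m = 0 :=
      fun l j => sub_eq_zero_of_eq (hcomm l j m n hm hn hmn)
    rw [commPP]
    simp only [commPm, z, mul_zero, Finset.sum_const_zero, sub_zero]
end

section
/- With b_n^i and p_n as above, the elements h_n^i = b_n^i − p_n(1-qⁿ)/(1-q^{rn}) satisfy the sl_r-type Heisenberg relations: for n > 0, [h_{-n}^i, h_n^j] = n(1-q₁ⁿ)(1-q₂ⁿ)·(1 − q^{(rδ_{ij}−1)n})/(1 − q^{rn})·q^{rn·[i>j]}, and ∑_{i=1}^{r} h_n^i q^{n(i-1)} = 0 for all n ≠ 0. -/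
attribute [local instance] LieRing.ofAssociativeRing
private lemma lie_sum' {L : Type*} [LieRing L]
    {ι : Type*} (s : Finset ι) (x : L) (f : ι → L) :
    ⁅x, ∑ i ∈ s, f i⁆ = ∑ i ∈ s, ⁅x, f i⁆ := by
  classical
  induction s using Finset.induction with
  | empty => simp
  | insert _ _ h ih => simp [Finset.sum_insert h, ih]

private lemma sum_lie' {L : Type*} [LieRing L]
    {ι : Type*} (s : Finset ι) (x : L) (f : ι → L) :
    ⁅∑ i ∈ s, f i, x⁆ = ∑ i ∈ s, ⁅f i, x⁆ := by
  classical
  induction s using Finset.induction with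
  | empty => simp
  | insert _ _ h ih => simp [Finset.sum_insert h, ih]

private lemma tel1 {F : Type*} [Field F] (u : F) (hu : u ≠ 0) (a r : ℕ) (ha : a < r) :
    ∑ j ∈ Finset.range r, u ^ j * (if a < j then 1 - u⁻¹ else if a = j then 1 else 0)
      = u ^ (r - 1) := by
  induction r with
  | zero => omega
  | succ r ih =>
    rcases Nat.lt_or_ge a r with h | h
    · rw [Finset.sum_range_succ, ih h, if_pos h]
      have h1 : u ^ r = u ^ (r - 1) * u := by
        rw [← pow_succ]; congr 1; omega
      rw [Nat.add_sub_cancel]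
      field_simp
      rw [h1]; ring
    · have ha' : a = r := by omega
      subst ha'
      rw [Finset.sum_range_succ, if_neg (lt_irrefl a), if_pos rfl, mul_one,
        Finset.sum_eq_zero, zero_add]
      · simp
      · intro j hj
        rw [Finset.mem_range] at hj
        rw [if_neg (by omega), if_neg (by omega), mul_zero]

private lemma tel2 {F : Type*} [Field F] (u : F) (hu : u ≠ 0) (a r : ℕ) (ha : a < r) :
    ∑ i ∈ Finset.range r, (u ^ i)⁻¹ * (if i < a then 1 - u⁻¹ else if i = a then 1 else 0)
      = 1 := by
  rw [← Finset.sum_subset (Finset.range_subset_range.2 (by omega : a + 1 ≤ r))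
    (by
      intro j _ hj
      rw [Finset.mem_range, not_lt] at hj
      rw [if_neg (by omega), if_neg (by omega), mul_zero])]
  rw [Finset.sum_range_succ, if_neg (lt_irrefl a), if_pos rfl, mul_one]
  have hc : (∑ i ∈ Finset.range a,
      (u ^ i)⁻¹ * (if i < a then 1 - u⁻¹ else if i = a then 1 else 0))
      = ∑ i ∈ Finset.range a, ((u ^ i)⁻¹ - (u ^ (i + 1))⁻¹) := by
    refine Finset.sum_congr rfl fun i hi => ?_
    rw [Finset.mem_range] at hi
    rw [if_pos hi, pow_succ, mul_inv, mul_sub, mul_one]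
  rw [hc, Finset.sum_range_sub' (fun i => (u ^ i)⁻¹)]
  simp

private lemma lie_smul'' {F : Type*} {A : Type*} [CommSemiring F] [Ring A] [Algebra F A]
    (c : F) (x y : A) : ⁅x, c • y⁆ = c • ⁅x, y⁆ := by
  simp only [Ring.lie_def, mul_smul_comm, smul_mul_assoc, smul_sub]

private lemma smul_lie'' {F : Type*} {A : Type*} [CommSemiring F] [Ring A] [Algebra F A]
    (c : F) (x y : A) : ⁅c • x, y⁆ = c • ⁅x, y⁆ := by
  simp only [Ring.lie_def, mul_smul_comm, smul_mul_assoc, smul_sub]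

private lemma case_reduce {F : Type*} [Field F] (u w K κ X Z : F) (hu : u ≠ 0)
    (h1 : u - 1 ≠ 0) (h2' : (1:F) - w*u ≠ 0)
    (hfin : K * κ - (1-u)/(1-w*u) * (K * w) = K * X / (1 - w*u) * Z) :
    K * κ - (1 - u⁻¹)/(1 - (w*u)⁻¹) * K -
      ((1-u)/(1-w*u) * (K * w) -
        (1 - u⁻¹)/(1 - (w*u)⁻¹) * ((1-u)/(1-w*u)) * (K * ((w*u - 1)/(u-1)))) =
    K * X / (1 - w*u) * Z := by
  have hβG : (1-u)/(1-w*u) * ((w*u-1)/(u-1)) = 1 := by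
    rw [div_mul_div_comm, div_eq_one_iff_eq (mul_ne_zero h2' h1)]
    ring
  have hcancel : (1 - u⁻¹)/(1 - (w*u)⁻¹) * ((1-u)/(1-w*u)) * (K * ((w*u - 1)/(u-1)))
      = (1 - u⁻¹)/(1 - (w*u)⁻¹) * K := by
    rw [show (1 - u⁻¹)/(1 - (w*u)⁻¹) * ((1-u)/(1-w*u)) * (K * ((w*u - 1)/(u-1)))
        = ((1-u)/(1-w*u) * ((w*u-1)/(u-1))) * ((1 - u⁻¹)/(1 - (w*u)⁻¹) * K) from by ring,
      hβG, one_mul]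
  linear_combination hcancel + hfin

private lemma case_lt {F : Type*} [Field F] (u w K : F) (hu : u ≠ 0)
    (h2' : (1:F) - w*u ≠ 0) :
    K * (1 - u⁻¹) - (1-u)/(1-w*u) * (K * w) = K * (1 - u⁻¹) / (1 - w*u) * 1 := by
  rw [div_mul_eq_mul_div, div_mul_eq_mul_div, eq_div_iff h2', sub_mul, div_mul_cancel₀ _ h2']
  linear_combination (K * w) * mul_inv_cancel₀ hu

private lemma case_eq {F : Type*} [Field F] (u w K : F) (hu : u ≠ 0)
    (h2' : (1:F) - w*u ≠ 0) :
    K * 1 - (1-u)/(1-w*u) * (K * w) = K * (1 - w) / (1 - w*u) * 1 := by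
  rw [div_mul_eq_mul_div, div_mul_eq_mul_div, eq_div_iff h2', sub_mul, div_mul_cancel₀ _ h2']
  ring

private lemma case_gt {F : Type*} [Field F] (u w K : F) (hu : u ≠ 0)
    (h2' : (1:F) - w*u ≠ 0) :
    K * 0 - (1-u)/(1-w*u) * (K * w) = K * (1 - u⁻¹) / (1 - w*u) * (w*u) := by
  rw [div_mul_eq_mul_div, div_mul_eq_mul_div, eq_div_iff h2', sub_mul, div_mul_cancel₀ _ h2']
  linear_combination (K * w) * mul_inv_cancel₀ hu

/-- In the gl_r deformed Heisenberg algebra, the elements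
`h_n^i = b_n^i - p_n (1-qⁿ)/(1-q^{rn})` (with `p_n = ∑_i b_n^i q^{n(i-1)}`) satisfy the
sl_r-type Heisenberg relations: for `n > 0`,
`[h_{-n}^i, h_n^j] = n(1-q₁ⁿ)(1-q₂ⁿ)(1-q^{(rδ_{ij}-1)n})/(1-q^{rn})·q^{rn·[i>j]}`,
and `∑_i h_n^i q^{n(i-1)} = 0` for all `n ≠ 0`. -/
theorem h_relations {F : Type*} [Field F] {A : Type*} [Ring A] [Algebra F A]
    (q₁ q₂ : F) (hq0 : q₁ * q₂ ≠ 0) (hgen : ∀ n : ℤ, n ≠ 0 → (q₁ * q₂) ^ n ≠ 1)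
    (r : ℕ) (hr : 0 < r) (b : Fin r → ℤ → A)
    (hcomm : ∀ (i j : Fin r) (m n : ℤ), m ≠ 0 → n ≠ 0 → m + n ≠ 0 →
      b i m * b j n = b j n * b i m)
    (hrel : ∀ (i j : Fin r) (n : ℕ), 0 < n →
      b i (-(n : ℤ)) * b j (n : ℤ) - b j (n : ℤ) * b i (-(n : ℤ)) =
        algebraMap F A ((n : F) * (1 - q₁ ^ n) * (1 - q₂ ^ n) *
          (if i < j then 1 - ((q₁ * q₂) ^ n)⁻¹ else if i = j then 1 else 0))) :
    (∀ (n : ℕ), 0 < n → ∀ (i j : Fin r),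
      (fun (l : Fin r) (m : ℤ) =>
          b l m - algebraMap F A ((1 - (q₁ * q₂) ^ m) / (1 - (q₁ * q₂) ^ ((r : ℤ) * m))) *
            ∑ l' : Fin r, algebraMap F A ((q₁ * q₂) ^ (m * (l' : ℤ))) * b l' m)
          i (-(n : ℤ)) *
        (fun (l : Fin r) (m : ℤ) =>
          b l m - algebraMap F A ((1 - (q₁ * q₂) ^ m) / (1 - (q₁ * q₂) ^ ((r : ℤ) * m))) *
            ∑ l' : Fin r, algebraMap F A ((q₁ * q₂) ^ (m * (l' : ℤ))) * b l' m)
          j (n : ℤ) -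
        (fun (l : Fin r) (m : ℤ) =>
          b l m - algebraMap F A ((1 - (q₁ * q₂) ^ m) / (1 - (q₁ * q₂) ^ ((r : ℤ) * m))) *
            ∑ l' : Fin r, algebraMap F A ((q₁ * q₂) ^ (m * (l' : ℤ))) * b l' m)
          j (n : ℤ) *
        (fun (l : Fin r) (m : ℤ) =>
          b l m - algebraMap F A ((1 - (q₁ * q₂) ^ m) / (1 - (q₁ * q₂) ^ ((r : ℤ) * m))) *
            ∑ l' : Fin r, algebraMap F A ((q₁ * q₂) ^ (m * (l' : ℤ))) * b l' m)
          i (-(n : ℤ)) =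
      algebraMap F A ((n : F) * (1 - q₁ ^ n) * (1 - q₂ ^ n) *
        (1 - (q₁ * q₂) ^ (((if i = j then (r : ℤ) else 0) - 1) * (n : ℤ))) /
          (1 - (q₁ * q₂) ^ ((r : ℤ) * (n : ℤ))) *
        (if j < i then (q₁ * q₂) ^ ((r : ℤ) * (n : ℤ)) else 1))) ∧
    (∀ (n : ℤ), n ≠ 0 →
      ∑ i : Fin r, algebraMap F A ((q₁ * q₂) ^ (n * (i : ℤ))) *
        (b i n - algebraMap F A ((1 - (q₁ * q₂) ^ n) / (1 - (q₁ * q₂) ^ ((r : ℤ) * n))) *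
          ∑ l' : Fin r, algebraMap F A ((q₁ * q₂) ^ (n * (l' : ℤ))) * b l' n) = 0) := by
  have hq : q₁ * q₂ ≠ 0 := hq0
  constructor
  · intro n hn i j
    dsimp only
    set q : F := q₁ * q₂ with hqdef
    set u : F := q ^ n with hudef
    have hnz : (n : ℤ) ≠ 0 := Int.natCast_ne_zero.2 hn.ne'
    have hu0 : u ≠ 0 := pow_ne_zero n hq
    have hu1 : u ≠ 1 := by
      have := hgen (n : ℤ) hnz
      rwa [zpow_natCast] at this
    have hur : u ^ r ≠ 1 := by
      have := hgen ((n * r : ℕ) : ℤ) (Int.natCast_ne_zero.2 (by positivity))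
      rwa [zpow_natCast, pow_mul] at this
    set K : F := (n : F) * (1 - q₁ ^ n) * (1 - q₂ ^ n) with hKdef
    have epos : ∀ l : Fin r, q ^ ((n : ℤ) * (l : ℤ)) = u ^ (l : ℕ) := by
      intro l
      rw [show ((n : ℤ) * (l : ℤ)) = ((n * (l : ℕ) : ℕ) : ℤ) by push_cast; ring,
        zpow_natCast, pow_mul]
    have eneg : ∀ l : Fin r, q ^ (-(n : ℤ) * (l : ℤ)) = (u ^ (l : ℕ))⁻¹ := by
      intro l
      rw [neg_mul, zpow_neg, epos l]
    have en : q ^ ((n : ℤ)) = u := zpow_natCast q n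
    have enn : q ^ (-(n : ℤ)) = u⁻¹ := by rw [zpow_neg, en]
    have ern : q ^ ((r : ℤ) * (n : ℤ)) = u ^ r := by
      rw [show ((r : ℤ) * (n : ℤ)) = ((n * r : ℕ) : ℤ) by push_cast; ring,
        zpow_natCast, pow_mul]
    have ernn : q ^ ((r : ℤ) * -(n : ℤ)) = (u ^ r)⁻¹ := by
      rw [mul_neg, zpow_neg, ern]
    have ern1 : q ^ (((r : ℤ) - 1) * (n : ℤ)) = u ^ (r - 1) := by
      rw [show (((r : ℤ)) - 1) * (n : ℤ) = ((n * (r - 1) : ℕ) : ℤ) by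
          push_cast [Nat.cast_sub hr]; ring,
        zpow_natCast, pow_mul]
    have hbb : ∀ k l : Fin r, ⁅b k (-(n : ℤ)), b l (n : ℤ)⁆ =
        algebraMap F A (K * (if k < l then 1 - u⁻¹ else if k = l then 1 else 0)) := by
      intro k l
      rw [Ring.lie_def]
      exact hrel k l n hn
    have hxQ : ∀ k : Fin r,
        ⁅b k (-(n : ℤ)), ∑ l' : Fin r, q ^ ((n : ℤ) * (l' : ℤ)) • b l' (n : ℤ)⁆ =
        algebraMap F A (K * u ^ (r - 1)) := by
      intro k
      rw [lie_sum']
      simp only [lie_smul'']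
      simp only [hbb, epos]
      simp only [Algebra.smul_def, ← map_mul]
      rw [← map_sum]
      congr 1
      simp only [Fin.lt_def, Fin.ext_iff]
      rw [Fin.sum_univ_eq_sum_range (fun l => u ^ l *
        (K * (if (k : ℕ) < l then 1 - u⁻¹ else if (k : ℕ) = l then 1 else 0))) r]
      have hre : ∀ m ∈ Finset.range r, u ^ m *
          (K * (if (k : ℕ) < m then 1 - u⁻¹ else if (k : ℕ) = m then 1 else 0)) =
          K * (u ^ m * (if (k : ℕ) < m then 1 - u⁻¹ else if (k : ℕ) = m then 1 else 0)) :=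
        fun m _ => by ring
      rw [Finset.sum_congr rfl hre, ← Finset.mul_sum, tel1 u hu0 (k : ℕ) r k.isLt]
    have hPy : ∀ l : Fin r,
        ⁅∑ k : Fin r, q ^ (-(n : ℤ) * (k : ℤ)) • b k (-(n : ℤ)), b l (n : ℤ)⁆ =
        algebraMap F A K := by
      intro l
      rw [sum_lie']
      simp only [smul_lie'']
      simp only [hbb, eneg]
      simp only [Algebra.smul_def, ← map_mul]
      rw [← map_sum]
      conv_rhs => rw [← mul_one K]
      congr 1
      simp only [Fin.lt_def, Fin.ext_iff]
      rw [Fin.sum_univ_eq_sum_range (fun m => (u ^ m)⁻¹ *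
        (K * (if m < (l : ℕ) then 1 - u⁻¹ else if m = (l : ℕ) then 1 else 0))) r]
      have hre : ∀ m ∈ Finset.range r, (u ^ m)⁻¹ *
          (K * (if m < (l : ℕ) then 1 - u⁻¹ else if m = (l : ℕ) then 1 else 0)) =
          K * ((u ^ m)⁻¹ * (if m < (l : ℕ) then 1 - u⁻¹ else if m = (l : ℕ) then 1 else 0)) :=
        fun m _ => by ring
      rw [Finset.sum_congr rfl hre, ← Finset.mul_sum, tel2 u hu0 (l : ℕ) r l.isLt]
    have hPQ :
        ⁅∑ k : Fin r, q ^ (-(n : ℤ) * (k : ℤ)) • b k (-(n : ℤ)),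
         ∑ l' : Fin r, q ^ ((n : ℤ) * (l' : ℤ)) • b l' (n : ℤ)⁆ =
        algebraMap F A (K * ((u ^ r - 1) / (u - 1))) := by
      rw [lie_sum']
      simp only [lie_smul'']
      simp only [hPy, epos]
      simp only [Algebra.smul_def, ← map_mul]
      rw [← map_sum]
      congr 1
      rw [Fin.sum_univ_eq_sum_range (fun l => u ^ l * K) r, ← Finset.sum_mul,
        geom_sum_eq hu1 r]
      ring
    simp only [← Algebra.smul_def]
    rw [← Ring.lie_def, lie_sub, sub_lie, sub_lie, lie_smul'', smul_lie'', smul_lie'',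
      lie_smul'', smul_smul, hbb i j, hxQ i, hPy j, hPQ]
    simp only [Algebra.smul_def, ← map_mul, ← map_sub, ← map_add]
    refine congrArg _ ?_
    clear_value K u q
    have hu1' : (1 : F) - u ≠ 0 := fun h => hu1 (sub_eq_zero.1 h).symm
    have hur' : (1 : F) - u ^ r ≠ 0 := fun h => hur (sub_eq_zero.1 h).symm
    have huri : (1 : F) - (u ^ r)⁻¹ ≠ 0 := by
      intro h
      exact hur (by rw [← inv_inv (u ^ r), (sub_eq_zero.1 h).symm, inv_one])
    have hu1'' : u - 1 ≠ 0 := sub_ne_zero.2 hu1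
    have hrr : u ^ r = u ^ (r - 1) * u := by rw [← pow_succ]; congr 1; omega
    have h2' : (1 : F) - u ^ (r - 1) * u ≠ 0 := by rw [← hrr]; exact hur'
    rcases lt_trichotomy i j with hij | hij | hij
    · rw [if_pos hij, if_neg (ne_of_lt hij), if_neg (asymm hij),
        show ((0 : ℤ) - 1) * (n : ℤ) = -(n : ℤ) by ring, enn, en, ern, ernn, hrr]
      exact case_reduce u (u ^ (r - 1)) K _ _ _ hu0 hu1'' h2'
        (case_lt u (u ^ (r - 1)) K hu0 h2')
    · subst hij
      rw [if_pos rfl, if_neg (lt_irrefl i), if_neg (lt_irrefl i), if_pos rfl,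
        ern1, enn, en, ern, ernn, hrr]
      exact case_reduce u (u ^ (r - 1)) K _ _ _ hu0 hu1'' h2'
        (case_eq u (u ^ (r - 1)) K hu0 h2')
    · rw [if_neg (asymm hij)]
      rw [if_neg hij.ne']
      rw [if_neg hij.ne']
      rw [if_pos hij]
      rw [show ((0 : ℤ) - 1) * (n : ℤ) = -(n : ℤ) by ring]
      rw [enn, en, ern, ernn, hrr]
      exact case_reduce u (u ^ (r - 1)) K _ _ _ hu0 hu1'' h2'
        (case_gt u (u ^ (r - 1)) K hu0 h2')
  · intro n hn
    set q : F := q₁ * q₂ with hqdef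
    set v : F := q ^ n with hvdef
    have hv0 : v ≠ 0 := zpow_ne_zero n hq
    have hv1 : v ≠ 1 := hgen n hn
    have hvr : v ^ r ≠ 1 := by
      have : q ^ ((n * r : ℤ)) ≠ 1 := hgen _ (by positivity <;> omega)
      rwa [zpow_mul, zpow_natCast] at this
    have hvi : ∀ l : Fin r, q ^ (n * (l : ℤ)) = v ^ (l : ℕ) := by
      intro l
      rw [zpow_mul, zpow_natCast]
    have hrn : q ^ ((r : ℤ) * n) = v ^ r := by
      rw [mul_comm, zpow_mul, zpow_natCast]
    simp only [mul_sub]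
    rw [Finset.sum_sub_distrib]
    have h1 : (∑ i : Fin r, algebraMap F A (q ^ (n * (i : ℤ))) *
        (algebraMap F A ((1 - q ^ n) / (1 - q ^ ((r : ℤ) * n))) *
          ∑ l' : Fin r, algebraMap F A (q ^ (n * (l' : ℤ))) * b l' n))
        = ∑ l' : Fin r, algebraMap F A (q ^ (n * (l' : ℤ))) * b l' n := by
      rw [← Finset.sum_mul, ← map_sum, ← mul_assoc, ← map_mul]
      have : (∑ i : Fin r, q ^ (n * (i : ℤ))) * ((1 - q ^ n) / (1 - q ^ ((r : ℤ) * n))) = 1 := by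
        have hs : (∑ i : Fin r, q ^ (n * (i : ℤ))) = (v ^ r - 1) / (v - 1) := by
          rw [Finset.sum_congr rfl fun i _ => hvi i]
          rw [Fin.sum_univ_eq_sum_range (fun i => v ^ i) r]
          exact geom_sum_eq hv1 r
        rw [hs, hrn]
        have h1 : v - 1 ≠ 0 := sub_ne_zero.2 hv1
        have h2 : v ^ r - 1 ≠ 0 := sub_ne_zero.2 hvr
        have h3 : (1 : F) - v ≠ 0 := fun h => hv1 (sub_eq_zero.1 h).symm
        have h4 : (1 : F) - v ^ r ≠ 0 := fun h => hvr (sub_eq_zero.1 h).symm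
        rw [div_mul_div_comm, div_eq_one_iff_eq (by exact mul_ne_zero h1 h4)]
        ring
      rw [this, map_one, one_mul]
    rw [h1, sub_self]
end

section
/- Let R be a convex lattice path with marked points p₁,...,p_n on it (n ≥ 1), each marked point lying on some edge of R. Consider the abstract simplicial complex K of subsets H ⊆ {1,...,n} such that H does not contain two non-adjacent marked points lying on the same edge of R (adjacent meaning consecutive among the marked points of that edge). Then the reduced Euler characteristic of K vanishes: ∑_{H ∈ K} (−1)^{|H|} = 0 (the sum includes the empty set). -/
open scoped Classical

section Aux

variable {s : ℕ} {m : Fin s → ℕ}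

/-- Admissibility: no two non-adjacent marks on a single edge. -/
def CPAdm (H : Finset (Σ e : Fin s, Fin (m e))) : Prop :=
  ∀ (e : Fin s) (j j' : Fin (m e)),
    (⟨e, j⟩ : Σ e : Fin s, Fin (m e)) ∈ H → (⟨e, j'⟩ : Σ e : Fin s, Fin (m e)) ∈ H →
      (j : ℕ) < (j' : ℕ) → (j' : ℕ) = (j : ℕ) + 1

lemma CPAdm.subset {H H' : Finset (Σ e : Fin s, Fin (m e))} (hs : H' ⊆ H) (h : CPAdm H) :
    CPAdm H' := fun e j j' hj hj' hlt => h e j j' (hs hj) (hs hj') hlt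

variable (e₀ : Fin s)

/-- The marks of `H` lying on the edge `e₀`. -/
def cpMarks (H : Finset (Σ e : Fin s, Fin (m e))) : Finset (Fin (m e₀)) :=
  Finset.univ.filter fun j => (⟨e₀, j⟩ : Σ e : Fin s, Fin (m e)) ∈ H

@[simp] lemma mem_cpMarks {H : Finset (Σ e : Fin s, Fin (m e))} {j : Fin (m e₀)} :
    j ∈ cpMarks e₀ H ↔ (⟨e₀, j⟩ : Σ e : Fin s, Fin (m e)) ∈ H := by
  simp [cpMarks]

lemma cpMarks_insert (k : Fin (m e₀)) (H : Finset (Σ e : Fin s, Fin (m e))) :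
    cpMarks e₀ (insert (⟨e₀, k⟩ : Σ e : Fin s, Fin (m e)) H) = insert k (cpMarks e₀ H) := by
  ext j
  simp [Sigma.mk.inj_iff]

lemma cpMarks_erase (k : Fin (m e₀)) (H : Finset (Σ e : Fin s, Fin (m e))) :
    cpMarks e₀ (Finset.erase H (⟨e₀, k⟩ : Σ e : Fin s, Fin (m e))) =
      Finset.erase (cpMarks e₀ H) k := by
  ext j
  simp [Sigma.mk.inj_iff]

variable (hn : 0 < m e₀)

/-- The sign-reversing involution on admissible sets, acting on edge `e₀`. -/
noncomputable def cpFlip (H : Finset (Σ e : Fin s, Fin (m e))) :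
    Finset (Σ e : Fin s, Fin (m e)) :=
  if h : (cpMarks e₀ H).Nonempty then
    if h2 : ((cpMarks e₀ H).min' h : ℕ) + 1 < m e₀ then
      if (⟨e₀, ⟨((cpMarks e₀ H).min' h : ℕ) + 1, h2⟩⟩ : Σ e : Fin s, Fin (m e)) ∈ H then
        H.erase ⟨e₀, ⟨((cpMarks e₀ H).min' h : ℕ) + 1, h2⟩⟩
      else insert (⟨e₀, ⟨((cpMarks e₀ H).min' h : ℕ) + 1, h2⟩⟩ : Σ e : Fin s, Fin (m e)) H
    else H.erase ⟨e₀, (cpMarks e₀ H).min' h⟩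
  else insert (⟨e₀, ⟨m e₀ - 1, by omega⟩⟩ : Σ e : Fin s, Fin (m e)) H

/-- `cpFlip` is either an insertion of a missing element or removal of a present one. -/
lemma cpFlip_spec (H : Finset (Σ e : Fin s, Fin (m e))) :
    (∃ x, x ∉ H ∧ cpFlip e₀ hn H = insert x H) ∨
    (∃ x, x ∈ H ∧ cpFlip e₀ hn H = H.erase x) := by
  unfold cpFlip
  by_cases h : (cpMarks e₀ H).Nonempty
  · rw [dif_pos h]
    by_cases h2 : ((cpMarks e₀ H).min' h : ℕ) + 1 < m e₀
    · rw [dif_pos h2]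
      by_cases h3 : (⟨e₀, ⟨((cpMarks e₀ H).min' h : ℕ) + 1, h2⟩⟩ : Σ e : Fin s, Fin (m e)) ∈ H
      · rw [if_pos h3]; exact Or.inr ⟨_, h3, rfl⟩
      · rw [if_neg h3]; exact Or.inl ⟨_, h3, rfl⟩
    · rw [dif_neg h2]
      exact Or.inr ⟨_, mem_cpMarks e₀ |>.1 ((cpMarks e₀ H).min'_mem h), rfl⟩
  · rw [dif_neg h]
    refine Or.inl ⟨_, ?_, rfl⟩
    intro hx
    exact h ⟨_, (mem_cpMarks e₀).2 hx⟩

lemma cpFlip_card (H : Finset (Σ e : Fin s, Fin (m e))) :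
    (-1 : ℤ) ^ H.card + (-1 : ℤ) ^ (cpFlip e₀ hn H).card = 0 := by
  rcases cpFlip_spec e₀ hn H with ⟨x, hx, he⟩ | ⟨x, hx, he⟩
  · rw [he, Finset.card_insert_of_notMem hx, pow_succ]
    ring
  · rw [he, Finset.card_erase_of_mem hx]
    have : 0 < H.card := Finset.card_pos.2 ⟨x, hx⟩
    obtain ⟨c, hc⟩ : ∃ c, H.card = c + 1 := ⟨H.card - 1, by omega⟩
    rw [hc, Nat.add_sub_cancel, pow_succ]
    ring

lemma cpFlip_ne (H : Finset (Σ e : Fin s, Fin (m e))) : cpFlip e₀ hn H ≠ H := by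
  rcases cpFlip_spec e₀ hn H with ⟨x, hx, he⟩ | ⟨x, hx, he⟩ <;> rw [he] <;> intro hc
  · exact hx (hc ▸ Finset.mem_insert_self x H)
  · exact (hc ▸ Finset.notMem_erase x H) hx

/-- Under admissibility, the marks on `e₀` are contained in `{min, min+1}`. -/
lemma cpMarks_cases {H : Finset (Σ e : Fin s, Fin (m e))} (hH : CPAdm H)
    (h : (cpMarks e₀ H).Nonempty) {j' : Fin (m e₀)} (hj' : j' ∈ cpMarks e₀ H) :
    (j' : ℕ) = ((cpMarks e₀ H).min' h : ℕ) ∨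
    (j' : ℕ) = ((cpMarks e₀ H).min' h : ℕ) + 1 := by
  set j := (cpMarks e₀ H).min' h with hj
  have hle : (j : ℕ) ≤ (j' : ℕ) := (cpMarks e₀ H).min'_le j' hj'
  rcases eq_or_lt_of_le hle with heq | hlt
  · exact Or.inl heq.symm
  · exact Or.inr (hH e₀ j j' ((mem_cpMarks e₀).1 ((cpMarks e₀ H).min'_mem h))
      ((mem_cpMarks e₀).1 hj') hlt)

lemma cpFlip_adm {H : Finset (Σ e : Fin s, Fin (m e))} (hH : CPAdm H) :
    CPAdm (cpFlip e₀ hn H) := by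
  unfold cpFlip
  by_cases h : (cpMarks e₀ H).Nonempty
  · rw [dif_pos h]
    by_cases h2 : ((cpMarks e₀ H).min' h : ℕ) + 1 < m e₀
    · rw [dif_pos h2]
      set j := (cpMarks e₀ H).min' h with hjdef
      by_cases h3 : (⟨e₀, ⟨(j : ℕ) + 1, h2⟩⟩ : Σ e : Fin s, Fin (m e)) ∈ H
      · rw [if_pos h3]
        exact hH.subset (Finset.erase_subset _ _)
      · rw [if_neg h3]
        -- marks H = {j}; inserting j+1 keeps admissibility
        intro e a a' ha ha' hlt
        rcases Finset.mem_insert.1 ha with hEq | hmem <;>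
          rcases Finset.mem_insert.1 ha' with hEq' | hmem'
        · exfalso
          have hEE := hEq.trans hEq'.symm
          rw [Sigma.mk.inj_iff] at hEE
          have : a = a' := eq_of_heq hEE.2
          omega
        · -- a is the new element on e₀, a' ∈ H
          obtain ⟨h1, h2'⟩ := Sigma.mk.inj_iff.1 hEq
          subst h1
          have ha'' : a = ⟨(j : ℕ) + 1, h2⟩ := eq_of_heq h2'
          have hmm : a' ∈ cpMarks e H := (mem_cpMarks e).2 hmem'
          rcases cpMarks_cases e hH h hmm with hc | hc <;> subst ha'' <;>
            simp only [Fin.val_mk] at hlt ⊢ <;> omega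
        · obtain ⟨h1, h2'⟩ := Sigma.mk.inj_iff.1 hEq'
          subst h1
          have ha'' : a' = ⟨(j : ℕ) + 1, h2⟩ := eq_of_heq h2'
          have hmm : a ∈ cpMarks e H := (mem_cpMarks e).2 hmem
          rcases cpMarks_cases e hH h hmm with hc | hc
          · subst ha''; simp only [Fin.val_mk]; omega
          · exfalso
            have haj : a = (⟨(j : ℕ) + 1, h2⟩ : Fin (m e)) := Fin.ext (by simpa using hc)
            exact h3 (haj ▸ hmem)
        · exact hH e a a' hmem hmem' hlt
    · rw [dif_neg h2]
      exact hH.subset (Finset.erase_subset _ _)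
  · rw [dif_neg h]
    -- marks H on e₀ are empty; inserting the top mark keeps admissibility
    intro e a a' ha ha' hlt
    rcases Finset.mem_insert.1 ha with hEq | hmem <;>
      rcases Finset.mem_insert.1 ha' with hEq' | hmem'
    · exfalso
      have hEE := hEq.trans hEq'.symm
      rw [Sigma.mk.inj_iff] at hEE
      have : a = a' := eq_of_heq hEE.2
      omega
    · exfalso
      obtain ⟨h1, -⟩ := Sigma.mk.inj_iff.1 hEq
      subst h1
      exact h ⟨a', (mem_cpMarks e).2 hmem'⟩
    · exfalso
      obtain ⟨h1, -⟩ := Sigma.mk.inj_iff.1 hEq'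
      subst h1
      exact h ⟨a, (mem_cpMarks e).2 hmem⟩
    · exact hH e a a' hmem hmem' hlt

lemma cpFlip_invol {H : Finset (Σ e : Fin s, Fin (m e))} (hH : CPAdm H) :
    cpFlip e₀ hn (cpFlip e₀ hn H) = H := by
  by_cases h : (cpMarks e₀ H).Nonempty
  · set j := (cpMarks e₀ H).min' h with hjdef
    have hjm : j ∈ cpMarks e₀ H := (cpMarks e₀ H).min'_mem h
    by_cases h2 : (j : ℕ) + 1 < m e₀
    · set j1 : Fin (m e₀) := ⟨(j : ℕ) + 1, h2⟩ with hj1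
      by_cases h3 : (⟨e₀, j1⟩ : Σ e : Fin s, Fin (m e)) ∈ H
      · -- flip H = H.erase ⟨e₀, j1⟩
        have hfl : cpFlip e₀ hn H = H.erase ⟨e₀, j1⟩ := by
          unfold cpFlip; rw [dif_pos h, dif_pos h2, if_pos h3]
        rw [hfl]
        have hmarks : cpMarks e₀ (H.erase ⟨e₀, j1⟩) = (cpMarks e₀ H).erase j1 :=
          cpMarks_erase e₀ j1 H
        have hjne : j ≠ j1 := by
          intro hc
          have hvc := congrArg Fin.val (hc.trans hj1)
          simp only [Fin.val_mk] at hvc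
          omega
        have hjm' : j ∈ cpMarks e₀ (H.erase ⟨e₀, j1⟩) := by
          rw [hmarks]; exact Finset.mem_erase.2 ⟨hjne, hjm⟩
        have hne : (cpMarks e₀ (H.erase ⟨e₀, j1⟩)).Nonempty := ⟨j, hjm'⟩
        have hmin : (cpMarks e₀ (H.erase ⟨e₀, j1⟩)).min' hne = j := by
          apply le_antisymm (Finset.min'_le _ _ hjm')
          apply Finset.le_min'
          intro y hy
          rw [hmarks] at hy
          exact Finset.min'_le _ _ (Finset.mem_erase.1 hy).2
        unfold cpFlip
        rw [dif_pos hne]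
        have h2' : (((cpMarks e₀ (H.erase ⟨e₀, j1⟩)).min' hne : ℕ)) + 1 < m e₀ := by
          rw [hmin]; exact h2
        rw [dif_pos h2']
        have hkey : (⟨e₀, ⟨((cpMarks e₀ (H.erase ⟨e₀, j1⟩)).min' hne : ℕ) + 1, h2'⟩⟩ :
            Σ e : Fin s, Fin (m e)) = ⟨e₀, j1⟩ := by
          congr 1
          · apply Fin.ext; simp only [Fin.val_mk, hmin]; simp [hj1]
        rw [hkey, if_neg (Finset.notMem_erase _ _)]
        rw [Finset.insert_erase h3]
      · -- flip H = insert ⟨e₀, j1⟩ H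
        have hfl : cpFlip e₀ hn H = insert (⟨e₀, j1⟩ : Σ e : Fin s, Fin (m e)) H := by
          unfold cpFlip; rw [dif_pos h, dif_pos h2, if_neg h3]
        rw [hfl]
        have hmarks : cpMarks e₀ (insert (⟨e₀, j1⟩ : Σ e : Fin s, Fin (m e)) H)
            = insert j1 (cpMarks e₀ H) := cpMarks_insert e₀ j1 H
        have hjm' : j ∈ cpMarks e₀ (insert (⟨e₀, j1⟩ : Σ e : Fin s, Fin (m e)) H) := by
          rw [hmarks]; exact Finset.mem_insert_of_mem hjm
        have hne : (cpMarks e₀ (insert (⟨e₀, j1⟩ : Σ e : Fin s, Fin (m e)) H)).Nonempty :=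
          ⟨j, hjm'⟩
        have hmin : (cpMarks e₀ (insert (⟨e₀, j1⟩ : Σ e : Fin s, Fin (m e)) H)).min' hne = j := by
          apply le_antisymm (Finset.min'_le _ _ hjm')
          apply Finset.le_min'
          intro y hy
          rw [hmarks] at hy
          rcases Finset.mem_insert.1 hy with rfl | hy'
          · exact Fin.le_def.2 (Nat.le_succ _)
          · exact Finset.min'_le _ _ hy'
        unfold cpFlip
        rw [dif_pos hne]
        have h2' : (((cpMarks e₀ (insert (⟨e₀, j1⟩ : Σ e : Fin s, Fin (m e)) H)).min' hne : ℕ))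
            + 1 < m e₀ := by rw [hmin]; exact h2
        rw [dif_pos h2']
        have hkey : (⟨e₀, ⟨((cpMarks e₀ (insert (⟨e₀, j1⟩ : Σ e : Fin s, Fin (m e)) H)).min'
            hne : ℕ) + 1, h2'⟩⟩ : Σ e : Fin s, Fin (m e)) = ⟨e₀, j1⟩ := by
          congr 1
          · apply Fin.ext; simp only [Fin.val_mk, hmin]; simp [hj1]
        rw [hkey, if_pos (Finset.mem_insert_self _ _), Finset.erase_insert h3]
    · -- j is the last mark; marks H = {j}, flip H = H.erase ⟨e₀, j⟩
      have hfl : cpFlip e₀ hn H = H.erase ⟨e₀, j⟩ := by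
        unfold cpFlip; rw [dif_pos h, dif_neg h2]
      rw [hfl]
      have hmarks0 : cpMarks e₀ (H.erase ⟨e₀, j⟩) = ∅ := by
        rw [cpMarks_erase]
        ext y
        simp only [Finset.mem_erase, Finset.notMem_empty, iff_false, not_and]
        intro hyne hy
        rcases cpMarks_cases e₀ hH h hy with hc | hc
        · exact hyne (Fin.ext hc)
        · omega
      have hne : ¬ (cpMarks e₀ (H.erase ⟨e₀, j⟩)).Nonempty := by
        rw [hmarks0]; exact Finset.not_nonempty_empty
      unfold cpFlip
      rw [dif_neg hne]
      have hkey : (⟨e₀, ⟨m e₀ - 1, by omega⟩⟩ : Σ e : Fin s, Fin (m e)) = ⟨e₀, j⟩ := by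
        congr 1
        · apply Fin.ext; simp; omega
      rw [hkey, Finset.insert_erase ((mem_cpMarks e₀).1 hjm)]
  · -- marks H empty: flip H = insert top H
    have hfl : cpFlip e₀ hn H = insert (⟨e₀, ⟨m e₀ - 1, by omega⟩⟩ : Σ e : Fin s, Fin (m e)) H := by
      unfold cpFlip; rw [dif_neg h]
    rw [hfl]
    set t : Fin (m e₀) := ⟨m e₀ - 1, by omega⟩ with ht
    have hmempty : cpMarks e₀ H = ∅ := Finset.not_nonempty_iff_eq_empty.1 h
    have hmarks : cpMarks e₀ (insert (⟨e₀, t⟩ : Σ e : Fin s, Fin (m e)) H) = {t} := by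
      rw [cpMarks_insert, hmempty]; rfl
    have hne : (cpMarks e₀ (insert (⟨e₀, t⟩ : Σ e : Fin s, Fin (m e)) H)).Nonempty := by
      rw [hmarks]; exact ⟨t, Finset.mem_singleton_self t⟩
    have htmem : t ∈ cpMarks e₀ (insert (⟨e₀, t⟩ : Σ e : Fin s, Fin (m e)) H) :=
      (mem_cpMarks e₀).2 (Finset.mem_insert_self _ _)
    have hmin : (cpMarks e₀ (insert (⟨e₀, t⟩ : Σ e : Fin s, Fin (m e)) H)).min' hne = t := by
      refine le_antisymm (Finset.min'_le _ _ htmem) (Finset.le_min' _ _ _ ?_)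
      intro y hy
      rw [hmarks, Finset.mem_singleton] at hy
      exact le_of_eq hy.symm
    unfold cpFlip
    rw [dif_pos hne]
    have h2 : ¬ ((((cpMarks e₀ (insert (⟨e₀, t⟩ : Σ e : Fin s, Fin (m e)) H)).min' hne : ℕ))
        + 1 < m e₀) := by rw [hmin]; simp [ht]; omega
    rw [dif_neg h2]
    have hkey : (⟨e₀, (cpMarks e₀ (insert (⟨e₀, t⟩ : Σ e : Fin s, Fin (m e)) H)).min' hne⟩ :
        Σ e : Fin s, Fin (m e)) = ⟨e₀, t⟩ := by rw [hmin]
    rw [hkey]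
    apply Finset.erase_insert
    intro hc
    exact h ⟨t, (mem_cpMarks e₀).2 hc⟩

end Aux

/-- Given finitely many edges carrying `m e` linearly ordered marked points each (with at
least one mark in total), the abstract simplicial complex of subsets containing no two
non-adjacent marks on a single edge has vanishing reduced Euler characteristic:
`∑_{H admissible} (-1)^{|H|} = 0` (the empty set included). -/
theorem convex_path_complex_euler_char (s : ℕ) (m : Fin s → ℕ) (hm : 0 < ∑ e, m e) :
    ∑ H ∈ (Finset.univ : Finset (Finset (Σ e : Fin s, Fin (m e)))).filter
        (fun H => ∀ (e : Fin s) (j j' : Fin (m e)),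
          (⟨e, j⟩ : Σ e : Fin s, Fin (m e)) ∈ H → (⟨e, j'⟩ : Σ e : Fin s, Fin (m e)) ∈ H →
            (j : ℕ) < (j' : ℕ) → (j' : ℕ) = (j : ℕ) + 1),
      (-1 : ℤ) ^ H.card = 0 := by
  classical
  obtain ⟨e₀, he₀⟩ : ∃ e, 0 < m e := by
    by_contra hc
    push_neg at hc
    have : ∑ e, m e = 0 := Finset.sum_eq_zero fun e _ => Nat.le_zero.1 (hc e)
    omega
  refine Finset.sum_involution (fun H _ => cpFlip e₀ he₀ H) ?_ ?_ ?_ ?_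
  · intro H _
    exact cpFlip_card e₀ he₀ H
  · intro H _ _
    exact cpFlip_ne e₀ he₀ H
  · intro H hH
    simp only [Finset.mem_filter, Finset.mem_univ, true_and] at hH ⊢
    exact cpFlip_adm e₀ he₀ hH
  · intro H hH
    simp only [Finset.mem_filter, Finset.mem_univ, true_and] at hH
    exact cpFlip_invol e₀ he₀ hH
end
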